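/- Let G be a locally compact abelian group with an open compact subgroup H and A an automorphism of G with H ⊆ A(H). Then ⋃_{n≥0} A^n(H) = G if and only if ⋂_{n≤0} (A*)^n(H^⊥) = {0}. -/

import Mathlib

open MeasureTheory

private lemma iterate_map_mul' {G : Type*} [CommGroup G] (A : G ≃* G) (n : ℕ) (x y : G) :
    (⇑A)^[n] (x * y) = (⇑A)^[n] x * (⇑A)^[n] y := by
  induction n with
  | zero => simp
  | succ n ih => simp [Function.iterate_succ_apply', ih, map_mul]

private lemma iterate_map_inv' {G : Type*} [CommGroup G] (A : G ≃* G) (n : ℕ) (x : G) :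
    (⇑A)^[n] x⁻¹ = ((⇑A)^[n] x)⁻¹ := by
  induction n with
  | zero => simp
  | succ n ih => simp [Function.iterate_succ_apply', ih]

/-- The natural embedding of the rational circle into `Circle`, as an additive hom. -/
private noncomputable def ratCircleChar : AddCircle (1 : ℚ) →+ Additive Circle :=
  QuotientAddGroup.lift _
    { toFun := fun q : ℚ => Additive.ofMul (Circle.exp (2 * Real.pi * q))
      map_zero' := by simp
      map_add' := by
        intro a b
        simp only [Rat.cast_add, mul_add, Circle.exp_add]
        rfl }
    (by
      intro x hx
      obtain ⟨n, rfl⟩ := AddSubgroup.mem_zmultiples_iff.mp hx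
      have h1 : n • (1 : ℚ) = (n : ℚ) := by rw [zsmul_eq_mul, mul_one]
      simp only [AddMonoidHom.mem_ker, AddMonoidHom.coe_mk, ZeroHom.coe_mk, h1,
        Rat.cast_intCast]
      rw [Circle.exp_two_pi_mul_int]
      rfl)

private lemma ratCircleChar_eq_zero {a : AddCircle (1 : ℚ)} (h : ratCircleChar a = 0) :
    a = 0 := by
  induction a using QuotientAddGroup.induction_on with
  | H q =>
    have hq : Additive.ofMul (Circle.exp (2 * Real.pi * q)) = 0 := h
    have h1 : Circle.exp (2 * Real.pi * q) = 1 := hq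
    obtain ⟨n, hn⟩ := Circle.exp_eq_one.mp h1
    have hqn : (q : ℝ) = (n : ℝ) := by
      have hπ : (2 * Real.pi) ≠ 0 := by positivity
      apply mul_left_cancel₀ hπ
      rw [hn]; ring
    have : (q : ℚ) = (n : ℚ) := by exact_mod_cast hqn
    rw [this]
    exact (AddCircle.coe_eq_zero_iff _).mpr ⟨n, by simp⟩

private lemma exists_monoidHom_circle {M : Type*} [CommGroup M] {m : M} (hm : m ≠ 1) :
    ∃ φ : M →* Circle, φ m ≠ 1 := by
  have h0 : (Additive.ofMul m : Additive M) ≠ 0 := hm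
  obtain ⟨c, hc⟩ := CharacterModule.exists_character_apply_ne_zero_of_ne_zero h0
  refine ⟨{ toFun := fun g => Additive.toMul (ratCircleChar (c (Additive.ofMul g)))
            map_one' := by
              show Additive.toMul (ratCircleChar (c (Additive.ofMul (1 : M)))) = 1
              simp only [ofMul_one, map_zero]
              rfl
            map_mul' := by
              intro a b
              show Additive.toMul (ratCircleChar (c (Additive.ofMul (a * b)))) = _
              simp only [ofMul_mul, map_add]
              rfl }, ?_⟩
  intro h
  have h' : ratCircleChar (c (Additive.ofMul m)) = 0 := h
  exact hc (ratCircleChar_eq_zero h')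

/-- A point outside an open subgroup can be separated from it by a continuous character
trivial on the subgroup. -/
private lemma exists_pontryagin_char {G : Type*} [CommGroup G] [TopologicalSpace G]
    [IsTopologicalGroup G] (U : Subgroup G) (hU : IsOpen (U : Set G)) {x0 : G} (hx : x0 ∉ U) :
    ∃ χ : PontryaginDual G, (∀ u ∈ U, χ u = 1) ∧ χ x0 ≠ 1 := by
  haveI := U.normal_of_comm
  have hq : ((x0 : G ⧸ U)) ≠ 1 := by
    simpa [QuotientGroup.eq_one_iff] using hx
  obtain ⟨φ, hφ⟩ := exists_monoidHom_circle hq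
  set f : G →* Circle := φ.comp (QuotientGroup.mk' U) with hf
  have hUf : ∀ u ∈ U, f u = 1 := by
    intro u hu
    have : ((u : G ⧸ U)) = 1 := (QuotientGroup.eq_one_iff u).mpr hu
    simp [hf, this]
  have hcont : Continuous f := by
    rw [continuous_iff_continuousAt]
    intro x
    have hopen : IsOpen ((fun z => x * z) '' (U : Set G)) :=
      (Homeomorph.mulLeft x).isOpenMap _ hU
    have hmem : ((fun z => x * z) '' (U : Set G)) ∈ nhds x :=
      hopen.mem_nhds ⟨1, U.one_mem, mul_one x⟩
    have heq : ∀ y ∈ (fun z => x * z) '' (U : Set G), f y = f x := by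
      rintro y ⟨u, hu, rfl⟩
      rw [map_mul, hUf u hu, mul_one]
    have hev : f =ᶠ[nhds x] fun _ => f x := Filter.eventuallyEq_of_mem hmem heq
    exact (continuousAt_const (y := f x)).congr hev.symm
  refine ⟨⟨f, hcont⟩, ?_, ?_⟩
  · intro u hu; exact hUf u hu
  · exact hφ

/-- Let `G` be a locally compact abelian group with an open compact
subgroup `H` and `A` an automorphism of `G` with `H ⊆ A(H)`.  Then
`⋃_{n ≥ 0} A^n(H) = G` if and only if `⋂_{n ≤ 0} (A*)^n(H^⊥) = {0}`, where `A*` is the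
adjoint automorphism of `Ĝ` (so `(A*)^{-n} ξ = ξ ∘ A⁻ⁿ = ξ ∘ (A⁻¹)ⁿ`), `H^⊥` is the
annihilator of `H`, and `0` denotes the trivial character. -/
theorem iUnion_eq_univ_iff_iInter_adjoint_annihilator_trivial
    {G : Type*} [CommGroup G] [TopologicalSpace G] [IsTopologicalGroup G]
    [LocallyCompactSpace G]
    (H : Subgroup G) (hHopen : IsOpen (H : Set G)) (hHcpt : IsCompact (H : Set G))
    (A : G ≃* G) (hA : Continuous A) (hA' : Continuous A.symm)
    (hHA : (H : Set G) ⊆ ⇑A '' (H : Set G)) :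
    (⋃ n : ℕ, (⇑A)^[n] '' (H : Set G)) = Set.univ ↔
      (⋂ n : ℕ, {χ : PontryaginDual G |
          ∃ ξ : PontryaginDual G, (∀ h ∈ H, ξ h = 1) ∧
            ∀ x : G, χ x = ξ ((⇑A.symm)^[n] x)})
        = {(1 : PontryaginDual G)} := by
  have hmono : ∀ n, (⇑A)^[n] '' (H : Set G) ⊆ (⇑A)^[n + 1] '' (H : Set G) := by
    intro n y hy
    obtain ⟨h, hh, rfl⟩ := hy
    obtain ⟨h', hh', rfl⟩ := hHA hh
    exact ⟨h', hh', (Function.iterate_succ_apply (⇑A) n h').symm⟩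
  have hchain : ∀ {m n : ℕ}, m ≤ n →
      (⇑A)^[m] '' (H : Set G) ⊆ (⇑A)^[n] '' (H : Set G) := by
    intro m n hmn
    exact monotone_nat_of_le_succ (f := fun n => (⇑A)^[n] '' (H : Set G)) hmono hmn
  have hLI : ∀ (n : ℕ) (x : G), (⇑A.symm)^[n] ((⇑A)^[n] x) = x := by
    intro n x
    exact (Function.LeftInverse.iterate A.symm_apply_apply n) x
  have hRI : ∀ (n : ℕ) (x : G), (⇑A)^[n] ((⇑A.symm)^[n] x) = x := by
    intro n x
    exact (Function.LeftInverse.iterate A.apply_symm_apply n) x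
  constructor
  · -- forward direction
    intro hUniv
    apply Set.eq_singleton_iff_unique_mem.mpr
    constructor
    · refine Set.mem_iInter.mpr fun n => ⟨1, fun h _ => rfl, fun x => rfl⟩
    · intro χ hχ
      apply ContinuousMonoidHom.ext
      intro x
      have hx : x ∈ ⋃ n : ℕ, (⇑A)^[n] '' (H : Set G) := hUniv ▸ Set.mem_univ x
      obtain ⟨n, h, hh, rfl⟩ := Set.mem_iUnion.mp hx
      obtain ⟨ξ, hξH, hξ⟩ := Set.mem_iInter.mp hχ n
      exact (hξ _).trans ((congrArg ξ (hLI n h)).trans (hξH h hh))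
  · -- backward direction
    intro hI
    by_contra hne
    obtain ⟨x0, hx0⟩ : ∃ x0, x0 ∉ ⋃ n : ℕ, (⇑A)^[n] '' (H : Set G) := by
      by_contra hcon
      push_neg at hcon
      exact hne (Set.eq_univ_iff_forall.mpr hcon)
    set U : Subgroup G :=
      { carrier := ⋃ n : ℕ, (⇑A)^[n] '' (H : Set G)
        one_mem' := Set.mem_iUnion.mpr ⟨0, by simpa using H.one_mem⟩
        mul_mem' := by
          intro a b ha hb
          obtain ⟨m, hm⟩ := Set.mem_iUnion.mp ha
          obtain ⟨n, hn⟩ := Set.mem_iUnion.mp hb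
          obtain ⟨h1, hh1, rfl⟩ := hchain (le_max_left m n) hm
          obtain ⟨h2, hh2, rfl⟩ := hchain (le_max_right m n) hn
          exact Set.mem_iUnion.mpr
            ⟨max m n, ⟨h1 * h2, H.mul_mem hh1 hh2, iterate_map_mul' A _ _ _⟩⟩
        inv_mem' := by
          intro a ha
          obtain ⟨n, hn⟩ := Set.mem_iUnion.mp ha
          obtain ⟨h, hh, rfl⟩ := hn
          exact Set.mem_iUnion.mpr ⟨n, ⟨h⁻¹, H.inv_mem hh, iterate_map_inv' A _ _⟩⟩ } with hUdef
    have hSopen : ∀ n : ℕ, IsOpen ((⇑A)^[n] '' (H : Set G)) := by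
      intro n
      induction n with
      | zero => simpa using hHopen
      | succ n ih =>
        have h1 : (⇑A)^[n + 1] '' (H : Set G) = ⇑A '' ((⇑A)^[n] '' (H : Set G)) := by
          rw [← Set.image_comp, ← Function.iterate_succ' (⇑A) n]
        have h2 : ⇑A '' ((⇑A)^[n] '' (H : Set G)) =
            ⇑A.symm ⁻¹' ((⇑A)^[n] '' (H : Set G)) := by
          ext y
          constructor
          · rintro ⟨z, hz, rfl⟩
            simpa [A.symm_apply_apply] using hz
          · intro hy
            exact ⟨A.symm y, hy, A.apply_symm_apply y⟩
        rw [h1, h2]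
        exact ih.preimage hA'
    have hUopen : IsOpen (U : Set G) := isOpen_iUnion hSopen
    have hx0U : x0 ∉ U := hx0
    obtain ⟨χ, hχU, hχx0⟩ := exists_pontryagin_char U hUopen hx0U
    have hχmem : χ ∈ ⋂ n : ℕ, {χ : PontryaginDual G |
        ∃ ξ : PontryaginDual G, (∀ h ∈ H, ξ h = 1) ∧
          ∀ x : G, χ x = ξ ((⇑A.symm)^[n] x)} := by
      refine Set.mem_iInter.mpr fun n => ?_
      refine ⟨⟨⟨⟨fun g => χ ((⇑A)^[n] g), ?_⟩, ?_⟩,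
        (map_continuous χ).comp (hA.iterate n)⟩, ?_, ?_⟩
      · show χ ((⇑A)^[n] 1) = 1
        rw [Function.iterate_fixed (map_one A) n, map_one]
      · intro a b
        show χ ((⇑A)^[n] (a * b)) = χ ((⇑A)^[n] a) * χ ((⇑A)^[n] b)
        rw [iterate_map_mul' A, map_mul]
      · intro h hh
        show χ ((⇑A)^[n] h) = 1
        exact hχU _ (Set.mem_iUnion.mpr ⟨n, ⟨h, hh, rfl⟩⟩)
      · intro x
        show χ x = χ ((⇑A)^[n] ((⇑A.symm)^[n] x))
        rw [hRI n x]
    rw [hI] at hχmem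
    have hone : χ = 1 := hχmem
    rw [hone] at hχx0
    exact hχx0 rfl
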